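/- Let a(r) = (1/2)√((r−3)(r+1)), b(r) = √((r−3)(r+1))/(r−1), c(r) = √((r²−1)/2), h(r) = (r−1)/√((r−3)(r+1)) be the 𝔹₈ metric functions on (3, ∞), and define u₁(r) = 2(r⁴+8r³+34r²−48r+21)/((r−1)³(r+1)⁵), u₂(r) = −(r⁴+4r³−18r²+52r−23)/((r−1)³(r+1)⁵), u₃(r) = 2(r²+14r−11)/((r−1)²(r+1)⁵). Then for all r > 3 the harmonic 4-form equations (55) hold: (1/h)(c⁴u₁)' − 2bc²u₂ + 4ac²u₃ = 0, (1/h)(a²c²u₂)' − a²b u₁ + bc²u₂ + 2ac²u₃ = 0, and (1/h)(abc²u₃)' + a²b u₁ + bc²u₂ = 0, primes denoting d/dr. (These u_i define the anti-self-dual L²-normalisable harmonic 4-form of the Spin(7) manifold 𝔹₈.) -/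

import Mathlib

set_option maxHeartbeats 2000000

private lemma polyDeriv4 (r : ℝ) (a3 a2 a1 a0 : ℝ) :
    HasDerivAt (fun x : ℝ => x ^ 4 + a3 * x ^ 3 + a2 * x ^ 2 + a1 * x + a0)
      (4 * r ^ 3 + a3 * (3 * r ^ 2) + a2 * (2 * r) + a1) r := by
  have h4 : HasDerivAt (fun x : ℝ => x ^ 4) (4 * r ^ 3) r := by
    simpa using hasDerivAt_pow 4 r
  have h3 : HasDerivAt (fun x : ℝ => x ^ 3) (3 * r ^ 2) r := by
    simpa using hasDerivAt_pow 3 r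
  have h2 : HasDerivAt (fun x : ℝ => x ^ 2) (2 * r) r := by
    simpa using hasDerivAt_pow 2 r
  have h1 : HasDerivAt (fun x : ℝ => x) 1 r := hasDerivAt_id r
  simpa using ((((h4.add (h3.const_mul a3)).add (h2.const_mul a2)).add
    (h1.const_mul a1)).add_const a0)

/-- The anti-self-dual `L²`-normalisable harmonic 4-form of the Spin(7)
manifold `𝔹₈`: with the `𝔹₈` metric functions
`a = (1/2)√((r-3)(r+1))`, `b = √((r-3)(r+1))/(r-1)`, `c = √((r²-1)/2)`,
`h = (r-1)/√((r-3)(r+1))` on `(3, ∞)`, the functions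
`u₁ = 2(r⁴+8r³+34r²-48r+21)/((r-1)³(r+1)⁵)`,
`u₂ = -(r⁴+4r³-18r²+52r-23)/((r-1)³(r+1)⁵)`,
`u₃ = 2(r²+14r-11)/((r-1)²(r+1)⁵)` satisfy the harmonic 4-form
equations (55):
`(1/h)(c⁴u₁)' - 2bc²u₂ + 4ac²u₃ = 0`,
`(1/h)(a²c²u₂)' - a²b u₁ + bc²u₂ + 2ac²u₃ = 0`,
`(1/h)(abc²u₃)' + a²b u₁ + bc²u₂ = 0`. -/
theorem B8_antiselfdual_harmonic_four_form
    (a b c h u₁ u₂ u₃ : ℝ → ℝ)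
    (hadef : a = fun r => (1 / 2) * Real.sqrt ((r - 3) * (r + 1)))
    (hbdef : b = fun r => Real.sqrt ((r - 3) * (r + 1)) / (r - 1))
    (hcdef : c = fun r => Real.sqrt ((r ^ 2 - 1) / 2))
    (hhdef : h = fun r => (r - 1) / Real.sqrt ((r - 3) * (r + 1)))
    (hu₁ : u₁ = fun r =>
      2 * (r ^ 4 + 8 * r ^ 3 + 34 * r ^ 2 - 48 * r + 21) / ((r - 1) ^ 3 * (r + 1) ^ 5))
    (hu₂ : u₂ = fun r =>
      -(r ^ 4 + 4 * r ^ 3 - 18 * r ^ 2 + 52 * r - 23) / ((r - 1) ^ 3 * (r + 1) ^ 5))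
    (hu₃ : u₃ = fun r =>
      2 * (r ^ 2 + 14 * r - 11) / ((r - 1) ^ 2 * (r + 1) ^ 5)) :
    ∀ r ∈ Set.Ioi (3 : ℝ),
      (1 / h r) * deriv (fun s => (c s) ^ 4 * u₁ s) r
          - 2 * b r * (c r) ^ 2 * u₂ r + 4 * a r * (c r) ^ 2 * u₃ r = 0 ∧
      (1 / h r) * deriv (fun s => (a s) ^ 2 * (c s) ^ 2 * u₂ s) r
          - (a r) ^ 2 * b r * u₁ r + b r * (c r) ^ 2 * u₂ r
          + 2 * a r * (c r) ^ 2 * u₃ r = 0 ∧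
      (1 / h r) * deriv (fun s => a s * b s * (c s) ^ 2 * u₃ s) r
          + (a r) ^ 2 * b r * u₁ r + b r * (c r) ^ 2 * u₂ r = 0 := by
  intro r hr
  have hr3 : (3 : ℝ) < r := hr
  have hm1 : (0:ℝ) < r - 1 := by linarith
  have hm3 : (0:ℝ) < r - 3 := by linarith
  have hp1 : (0:ℝ) < r + 1 := by linarith
  have hnn : (0:ℝ) ≤ (r - 3) * (r + 1) := by positivity
  have hspos : (0:ℝ) < Real.sqrt ((r - 3) * (r + 1)) := Real.sqrt_pos.2 (by positivity)
  have hs2 : Real.sqrt ((r - 3) * (r + 1)) ^ 2 = (r - 3) * (r + 1) := Real.sq_sqrt hnn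
  have hmem : Set.Ioi (3:ℝ) ∈ nhds r := isOpen_Ioi.mem_nhds hr
  have hc2 : c r ^ 2 = (r ^ 2 - 1) / 2 := by
    rw [hcdef]; exact Real.sq_sqrt (by nlinarith)
  have ha2 : a r ^ 2 = (r - 3) * (r + 1) / 4 := by
    rw [hadef]; simp only [mul_pow, hs2]; ring
  -- derivatives of denominators
  have hD1 : HasDerivAt (fun x : ℝ => 2 * (x - 1) * (x + 1) ^ 3)
      ((2 * 1) * (r + 1) ^ 3 + 2 * (r - 1) * (3 * (r + 1) ^ 2 * 1)) r := by
    have hA : HasDerivAt (fun x : ℝ => 2 * (x - 1)) (2 * 1) r :=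
      ((hasDerivAt_id r).sub_const 1).const_mul 2
    have hB : HasDerivAt (fun x : ℝ => (x + 1) ^ 3) (3 * (r + 1) ^ 2 * 1) r := by
      simpa using ((hasDerivAt_id r).add_const 1).fun_pow 3
    simpa using hA.fun_mul hB
  have hD2 : ∀ k : ℝ, HasDerivAt (fun x : ℝ => k * (x - 1) ^ 2 * (x + 1) ^ 3)
      ((k * (2 * (r - 1) ^ 1 * 1)) * (r + 1) ^ 3
        + k * (r - 1) ^ 2 * (3 * (r + 1) ^ 2 * 1)) r := by
    intro k
    have hA : HasDerivAt (fun x : ℝ => k * (x - 1) ^ 2) (k * (2 * (r - 1) ^ 1 * 1)) r :=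
      (((hasDerivAt_id r).sub_const 1).pow 2).const_mul k
    have hB : HasDerivAt (fun x : ℝ => (x + 1) ^ 3) (3 * (r + 1) ^ 2 * 1) r := by
      simpa using ((hasDerivAt_id r).add_const 1).fun_pow 3
    simpa using hA.fun_mul hB
  refine ⟨?_, ?_, ?_⟩
  · -- equation 1
    have hev : (fun x => c x ^ 4 * u₁ x) =ᶠ[nhds r]
        (fun x => (x ^ 4 + 8 * x ^ 3 + 34 * x ^ 2 - 48 * x + 21)
          / (2 * (x - 1) * (x + 1) ^ 3)) := by
      filter_upwards [hmem] with x hx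
      have hx3 : (3:ℝ) < x := hx
      have hc4 : c x ^ 4 = ((x ^ 2 - 1) / 2) ^ 2 := by
        rw [hcdef]
        rw [show (4:ℕ) = 2 * 2 from rfl, pow_mul, Real.sq_sqrt (by nlinarith)]
      have hx1 : x - 1 ≠ 0 := by linarith
      have hxp1 : x + 1 ≠ 0 := by linarith
      rw [hc4, hu₁]
      field_simp
      ring
    have hN : HasDerivAt (fun x : ℝ => x ^ 4 + 8 * x ^ 3 + 34 * x ^ 2 - 48 * x + 21)
        (4 * r ^ 3 + 8 * (3 * r ^ 2) + 34 * (2 * r) + (-48)) r := by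
      have := polyDeriv4 r 8 34 (-48) 21
      convert this using 2 <;> ring
    have hDne : 2 * (r - 1) * (r + 1) ^ 3 ≠ 0 := by positivity
    have hder : HasDerivAt (fun x : ℝ => (x ^ 4 + 8 * x ^ 3 + 34 * x ^ 2 - 48 * x + 21)
          / (2 * (x - 1) * (x + 1) ^ 3))
        (((4 * r ^ 3 + 8 * (3 * r ^ 2) + 34 * (2 * r) + (-48)) * (2 * (r - 1) * (r + 1) ^ 3)
          - (r ^ 4 + 8 * r ^ 3 + 34 * r ^ 2 - 48 * r + 21)
            * ((2 * 1) * (r + 1) ^ 3 + 2 * (r - 1) * (3 * (r + 1) ^ 2 * 1)))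
          / (2 * (r - 1) * (r + 1) ^ 3) ^ 2) r := hN.div hD1 hDne
    rw [hev.deriv_eq, hder.deriv, hc2, hbdef, hadef, hhdef, hu₂, hu₃]
    simp only
    field_simp
    ring
  · -- equation 2
    have hev : (fun x => a x ^ 2 * c x ^ 2 * u₂ x) =ᶠ[nhds r]
        (fun x => (-((x - 3) * (x ^ 4 + 4 * x ^ 3 - 18 * x ^ 2 + 52 * x - 23)))
          / (8 * (x - 1) ^ 2 * (x + 1) ^ 3)) := by
      filter_upwards [hmem] with x hx
      have hx3 : (3:ℝ) < x := hx
      have ha2x : a x ^ 2 = (x - 3) * (x + 1) / 4 := by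
        rw [hadef]; simp only [mul_pow, Real.sq_sqrt (by nlinarith : (0:ℝ) ≤ (x-3)*(x+1))]
        ring
      have hc2x : c x ^ 2 = (x ^ 2 - 1) / 2 := by
        rw [hcdef]; exact Real.sq_sqrt (by nlinarith)
      have hx1 : x - 1 ≠ 0 := by linarith
      have hxp1 : x + 1 ≠ 0 := by linarith
      rw [ha2x, hc2x, hu₂]
      field_simp
      ring
    have hQ : HasDerivAt (fun x : ℝ => x ^ 4 + 4 * x ^ 3 - 18 * x ^ 2 + 52 * x - 23)
        (4 * r ^ 3 + 4 * (3 * r ^ 2) + (-18) * (2 * r) + 52) r := by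
      have := polyDeriv4 r 4 (-18) 52 (-23)
      convert this using 2 <;> ring
    have hN : HasDerivAt (fun x : ℝ => -((x - 3) * (x ^ 4 + 4 * x ^ 3 - 18 * x ^ 2 + 52 * x - 23)))
        (-(1 * (r ^ 4 + 4 * r ^ 3 - 18 * r ^ 2 + 52 * r - 23)
          + (r - 3) * (4 * r ^ 3 + 4 * (3 * r ^ 2) + (-18) * (2 * r) + 52))) r :=
      (((hasDerivAt_id r).sub_const 3).mul hQ).neg
    have hDne : 8 * (r - 1) ^ 2 * (r + 1) ^ 3 ≠ 0 := by positivity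
    have hder := hN.fun_div (hD2 8) hDne
    rw [hev.deriv_eq, hder.deriv, hc2, ha2, hbdef, hadef, hhdef, hu₁, hu₂, hu₃]
    simp only
    field_simp
    ring
  · -- equation 3
    have hev : (fun x => a x * b x * c x ^ 2 * u₃ x) =ᶠ[nhds r]
        (fun x => ((x - 3) * (x ^ 2 + 14 * x - 11))
          / (2 * (x - 1) ^ 2 * (x + 1) ^ 3)) := by
      filter_upwards [hmem] with x hx
      have hx3 : (3:ℝ) < x := hx
      have hab : a x * b x = (x - 3) * (x + 1) / (2 * (x - 1)) := by
        have hx1' : x - 1 ≠ 0 := by linarith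
        rw [hadef, hbdef]
        simp only
        field_simp
        exact Real.sq_sqrt (by nlinarith)
      have hc2x : c x ^ 2 = (x ^ 2 - 1) / 2 := by
        rw [hcdef]; exact Real.sq_sqrt (by nlinarith)
      have hx1 : x - 1 ≠ 0 := by linarith
      have hxp1 : x + 1 ≠ 0 := by linarith
      rw [hab, hc2x, hu₃]
      field_simp
      ring
    have hQ : HasDerivAt (fun x : ℝ => x ^ 2 + 14 * x - 11) (2 * r + 14) r := by
      have h2 : HasDerivAt (fun x : ℝ => x ^ 2) (2 * r) r := by simpa using hasDerivAt_pow 2 r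
      simpa using (h2.add ((hasDerivAt_id r).const_mul 14)).sub_const 11
    have hN : HasDerivAt (fun x : ℝ => (x - 3) * (x ^ 2 + 14 * x - 11))
        (1 * (r ^ 2 + 14 * r - 11) + (r - 3) * (2 * r + 14)) r :=
      ((hasDerivAt_id r).sub_const 3).mul hQ
    have hDne : 2 * (r - 1) ^ 2 * (r + 1) ^ 3 ≠ 0 := by positivity
    have hder := hN.fun_div (hD2 2) hDne
    rw [hev.deriv_eq, hder.deriv, hc2, ha2, hbdef, hhdef, hu₁, hu₂]
    simp only
    field_simp
    ring
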